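/- The vector r_i^k defined recursively by r_i^{i+1} = A_{i+1,i}/(λ_i - λ_{i+1}) and r_i^k = (A_{k,i} + Σ_{j=i+1}^{k-1} A_{k,j} r_i^j)/(λ_i - λ_k) for k = i+2,…,N coincides with the explicit formula r_i^k = -f_k/(1 - Σ_{j=0}^i f_j) for all k = i+1,…,N, provided λ_i ≠ λ_k for all k > i. -/

import Mathlib

/-- The recursively defined eigenvector components coincide with the explicit
formula `r_i^k = -f_k/(1 - Σ_{j=0}^i f_j)` for `k = i+1,…,N`, provided `λ_i ≠ λ_k` for `k > i`. -/
theorem stmt2 (N : ℕ) (hN : 1 ≤ N) (v f : ℕ → ℝ)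
    (hv : StrictMonoOn v (Set.Iic N)) (hv0 : v 0 = 0) (hvN : v N = 1)
    (hf : ∀ k, 0 < f k) (hρ : ∑ i ∈ Finset.range (N+1), f i < 1)
    (lam : ℕ → ℝ)
    (hlam : ∀ i, lam i = v i - (1/(1 - ∑ j ∈ Finset.range (N+1), f j)) *
      ∑ j ∈ Finset.Ioc i N, (v j - v i) * f j)
    (A : ℕ → ℕ → ℝ)
    (hAd : ∀ i, A i i = lam i)
    (hAl : ∀ k j, j < k → A k j = (1/(1 - ∑ l ∈ Finset.range (N+1), f l)) * (v k - v j) * f k)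
    (i : ℕ) (hi : i < N)
    (hne : ∀ k, i < k → k ≤ N → lam i ≠ lam k)
    (r : ℕ → ℝ)
    (hr1 : r (i+1) = A (i+1) i / (lam i - lam (i+1)))
    (hrk : ∀ k, i + 2 ≤ k → k ≤ N →
      r k = (A k i + ∑ j ∈ Finset.Ioo i k, A k j * r j) / (lam i - lam k)) :
    ∀ k, i + 1 ≤ k → k ≤ N → r k = -f k / (1 - ∑ j ∈ Finset.range (i+1), f j) := by
  set ρ := ∑ j ∈ Finset.range (N+1), f j with hρdef
  set Fi := ∑ j ∈ Finset.range (i+1), f j with hFidef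
  have hρpos : (0:ℝ) < 1 - ρ := by linarith
  have hρne : (1:ℝ) - ρ ≠ 0 := ne_of_gt hρpos
  have hFile : Fi ≤ ρ := Finset.sum_le_sum_of_subset_of_nonneg
      (Finset.range_subset_range.mpr (by omega)) (fun j _ _ => (hf j).le)
  have hFipos : (0:ℝ) < 1 - Fi := by linarith
  have hFine : (1:ℝ) - Fi ≠ 0 := ne_of_gt hFipos
  intro k
  induction k using Nat.strong_induction_on with
  | _ k IH =>
    intro hk1 hk2
    have hik : i < k := hk1
    have hsub : lam i - lam k ≠ 0 := sub_ne_zero.mpr (hne k hik hk2)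
    -- uniform recursion
    have hreq : r k = (A k i + ∑ j ∈ Finset.Ioo i k, A k j * r j) / (lam i - lam k) := by
      rcases eq_or_lt_of_le hk1 with h | h
      · have hempty : Finset.Ioo i k = ∅ := by
          apply Finset.eq_empty_of_forall_notMem
          intro j hj
          simp only [Finset.mem_Ioo] at hj
          omega
        rw [hempty, Finset.sum_empty, add_zero, ← h]
        exact hr1
      · exact hrk k (by omega) hk2
    -- evaluate the sum using the IH
    have hsum : ∑ j ∈ Finset.Ioo i k, A k j * r j
        = -(1/(1-ρ)) * f k / (1 - Fi) * ∑ j ∈ Finset.Ioo i k, (v k - v j) * f j := by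
      rw [Finset.mul_sum]
      apply Finset.sum_congr rfl
      intro j hj
      simp only [Finset.mem_Ioo] at hj
      rw [hAl k j hj.2, IH j hj.2 (by omega) (by omega)]
      field_simp
    -- convert the Ioo sum to an Ioc sum
    have hT : ∑ j ∈ Finset.Ioo i k, (v k - v j) * f j
        = ∑ j ∈ Finset.Ioc i k, (v k - v j) * f j := by
      rw [← Finset.Ioo_insert_right hik, Finset.sum_insert (by simp)]
      simp
    set T := ∑ j ∈ Finset.Ioc i k, (v k - v j) * f j with hTdef
    set Q := ∑ j ∈ Finset.Ioc i k, (v j - v i) * f j with hQdef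
    set U := ∑ j ∈ Finset.Ioc i k, f j with hUdef
    set W := ∑ j ∈ Finset.Ioc k N, f j with hWdef
    set S2 := ∑ j ∈ Finset.Ioc k N, (v j - v k) * f j with hS2def
    -- (b) : T + Q = (v k - v i) * U
    have hb : T = (v k - v i) * U - Q := by
      rw [hTdef, hQdef, hUdef, Finset.mul_sum, eq_sub_iff_add_eq, ← Finset.sum_add_distrib]
      apply Finset.sum_congr rfl
      intro j _
      ring
    -- (a) : S1 = Q + S2 + (v k - v i) * W
    have ha : ∑ j ∈ Finset.Ioc i N, (v j - v i) * f j = Q + S2 + (v k - v i) * W := by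
      rw [← Finset.sum_Ioc_consecutive _ (le_of_lt hik) hk2]
      have h2 : ∑ j ∈ Finset.Ioc k N, (v j - v i) * f j = S2 + (v k - v i) * W := by
        rw [hS2def, hWdef, Finset.mul_sum, ← Finset.sum_add_distrib]
        apply Finset.sum_congr rfl
        intro j _
        ring
      rw [h2]
      ring
    -- (c) : ρ = Fi + U + W
    have hc : ρ = Fi + U + W := by
      have h1 : ∑ j ∈ Finset.Ioc i N, f j = U + W :=
        (Finset.sum_Ioc_consecutive _ (le_of_lt hik) hk2).symm
      have h2 : Fi + ∑ j ∈ Finset.Ioc i N, f j = ρ := by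
        simp only [hρdef, hFidef, Finset.range_eq_Ico]
        rw [← Finset.Ico_add_one_add_one_eq_Ioc]
        exact Finset.sum_Ico_consecutive _ (by omega) (by omega)
      linarith
    have hW : W = ρ - Fi - U := by linarith
    -- expression for lam i - lam k
    have hlamik : lam i - lam k
        = -(v k - v i) - (1/(1-ρ)) * Q - (1/(1-ρ)) * ((v k - v i) * W) := by
      rw [hlam i, hlam k, ha, ← hS2def]
      ring
    -- numerator identity
    have hnum : A k i + ∑ j ∈ Finset.Ioo i k, A k j * r j
        = (lam i - lam k) * (-f k / (1 - Fi)) := by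
      rw [hAl k i hik, hsum, hT, hb, hlamik, hW]
      field_simp
      ring
    rw [hreq, hnum]
    exact mul_div_cancel_left₀ _ hsub
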